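/- Let X be a finite set and d : X × X → ℝ≥0 a symmetric distance of negative type with d(a,a)=0. For any two non-empty subsets A, B ⊆ X, (|B|/|A|)·d(A) + (|A|/|B|)·d(B) ≤ d(A,B), where d(A) = ∑_{{a,a'}⊆A} d(a,a') and d(A,B) = ∑_{a∈A, b∈B} d(a,b). -/

import Mathlib

open Finset

/-- `d` is a distance of negative type on the finite type `X`. -/
def NegType {X : Type*} [Fintype X] (d : X → X → ℝ) : Prop :=
  ∀ x : X → ℝ, ∑ i, x i = 0 → ∑ i, ∑ j, x i * d i j * x j ≤ 0

/-- The dispersion of a finite set: sum of distances over unordered pairs. -/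
noncomputable def disp {X : Type*} (d : X → X → ℝ) (A : Finset X) : ℝ :=
  (∑ a ∈ A, ∑ b ∈ A, d a b) / 2

/-- Sum of all distances between two sets. -/
def dsum {X : Type*} (d : X → X → ℝ) (A B : Finset X) : ℝ :=
  ∑ a ∈ A, ∑ b ∈ B, d a b

theorem stmt_1 {X : Type*} [Fintype X] (d : X → X → ℝ)
    (hsymm : ∀ a b, d a b = d b a) (hnonneg : ∀ a b, 0 ≤ d a b)
    (hdiag : ∀ a, d a a = 0) (hneg : NegType d)
    (A B : Finset X) (hA : A.Nonempty) (hB : B.Nonempty) :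
    (B.card : ℝ) / A.card * disp d A + (A.card : ℝ) / B.card * disp d B
      ≤ dsum d A B := by
  classical
  have ha : (0:ℝ) < A.card := by exact_mod_cast Finset.card_pos.mpr hA
  have hb : (0:ℝ) < B.card := by exact_mod_cast Finset.card_pos.mpr hB
  set a : ℝ := (A.card : ℝ) with hadef
  set b : ℝ := (B.card : ℝ) with hbdef
  set x : X → ℝ := fun i => (if i ∈ A then 1/a else 0) - (if i ∈ B then 1/b else 0)
    with hxdef
  have hsum : ∑ i, x i = 0 := by
    simp only [hxdef, Finset.sum_sub_distrib, Finset.sum_ite_mem, Finset.univ_inter,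
      Finset.sum_const, nsmul_eq_mul]
    rw [← hadef, ← hbdef]
    field_simp
    norm_num
  have key := hneg x hsum
  have h1 : ∀ (C D : Finset X) (c e : ℝ),
      (∑ i, ∑ j, (if i ∈ C then c else 0) * d i j * (if j ∈ D then e else 0))
        = c * e * dsum d C D := by
    intro C D c e
    have hrow : ∀ i, (∑ j, (if i ∈ C then c else 0) * d i j * (if j ∈ D then e else 0))
        = if i ∈ C then (∑ j ∈ D, c * d i j * e) else 0 := by
      intro i
      by_cases hi : i ∈ C
      · simp only [hi, if_true, mul_ite, mul_zero, Finset.sum_ite_mem, Finset.univ_inter]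
      · simp [hi]
    simp only [hrow, Finset.sum_ite_mem, Finset.univ_inter, dsum, Finset.mul_sum]
    exact Finset.sum_congr rfl fun i _ => Finset.sum_congr rfl fun j _ => by ring
  have expand : ∀ i j, x i * d i j * x j =
      (if i ∈ A then 1/a else 0) * d i j * (if j ∈ A then 1/a else 0)
      - (if i ∈ A then 1/a else 0) * d i j * (if j ∈ B then 1/b else 0)
      - (if i ∈ B then 1/b else 0) * d i j * (if j ∈ A then 1/a else 0)
      + (if i ∈ B then 1/b else 0) * d i j * (if j ∈ B then 1/b else 0) := by
    intro i j; simp only [hxdef]; ring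
  have hBA : dsum d B A = dsum d A B := by
    rw [dsum, dsum, Finset.sum_comm]
    exact Finset.sum_congr rfl fun i _ => Finset.sum_congr rfl fun j _ => hsymm _ _
  have hexp : ∑ i, ∑ j, x i * d i j * x j
      = (1/a) * (1/a) * dsum d A A + (1/b) * (1/b) * dsum d B B
        - 2 * ((1/a) * (1/b) * dsum d A B) := by
    simp only [expand, Finset.sum_add_distrib, Finset.sum_sub_distrib, h1, hBA]
    ring
  rw [hexp] at key
  have h2 : b/a * disp d A + a/b * disp d B - dsum d A B
      = (a*b/2) * ((1/a) * (1/a) * dsum d A A + (1/b) * (1/b) * dsum d B B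
        - 2 * ((1/a) * (1/b) * dsum d A B)) := by
    rw [disp, disp]
    show _ = (a*b/2) * ((1/a) * (1/a) * dsum d A A + (1/b) * (1/b) * dsum d B B
        - 2 * ((1/a) * (1/b) * dsum d A B))
    rw [dsum, dsum, dsum]
    field_simp
  have h3 : (a*b/2) * ((1/a) * (1/a) * dsum d A A + (1/b) * (1/b) * dsum d B B
        - 2 * ((1/a) * (1/b) * dsum d A B)) ≤ 0 :=
    mul_nonpos_of_nonneg_of_nonpos (by positivity) key
  linarith [h2 ▸ h3]
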